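/- arXiv:2405.07254 — 3 statements merged into one kernel-verified Lean document; each statement's English description precedes it below -/
import Mathlib

section
/- For all Z, X ∈ Mat(n,K), all g₁, g₂, g₃ ∈ UT(n), and every pair (i,k) with i' > k, one has R⁺_{ik}(g₁ Z g₂⁻¹, g₁ X g₃⁻¹) = R⁺_{ik}(Z,X). -/
open Matrix

/-- Entry of an `n × n` matrix in 1-based indexing; `0` outside the range `[1,n]²`. -/
def ent {R : Type*} [Zero R] {n : ℕ} (X : Matrix (Fin n) (Fin n) R) (a b : ℕ) : R :=
  if h : 1 ≤ a ∧ a ≤ n ∧ 1 ≤ b ∧ b ≤ n then X ⟨a - 1, by omega⟩ ⟨b - 1, by omega⟩ else 0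

/-- `Dmin k X`: the left lower corner minor of order `n - k + 1`;
rows `k,…,n`, columns `1,…,n-k+1` (1-based). -/
noncomputable def Dmin {R : Type*} [CommRing R] {n : ℕ} (k : ℕ)
    (X : Matrix (Fin n) (Fin n) R) : R :=
  (Matrix.of fun r c : Fin (n + 1 - k) => ent X (k + r.val) (1 + c.val)).det

/-- `Mmin i j X`: minor of order `n - i + 1` with rows `i,…,n` and
columns `1,…,n-i` together with column `j` (1-based). -/
noncomputable def Mmin {R : Type*} [CommRing R] {n : ℕ} (i j : ℕ)
    (X : Matrix (Fin n) (Fin n) R) : R :=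
  (Matrix.of fun r c : Fin (n + 1 - i) =>
    ent X (i + r.val) (if c.val < n - i then 1 + c.val else j)).det

/-- `Nmin j k Y`: minor of order `n - k + 1` with rows `{j} ∪ {k+1,…,n}` and
columns `1,…,n-k+1` (1-based). -/
noncomputable def Nmin {R : Type*} [CommRing R] {n : ℕ} (j k : ℕ)
    (Y : Matrix (Fin n) (Fin n) R) : R :=
  (Matrix.of fun r c : Fin (n + 1 - k) =>
    ent Y (if r.val = 0 then j else k + r.val) (1 + c.val)).det

/-- `Pmin i k X Y = Σ_{j=i'}^{k} M_{ij}(X) N_{jk}(Y)`, where `i' = n - i + 1`. -/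
noncomputable def Pmin {R : Type*} [CommRing R] {n : ℕ} (i k : ℕ)
    (X Y : Matrix (Fin n) (Fin n) R) : R :=
  ∑ j ∈ Finset.Icc (n + 1 - i) k, Mmin i j X * Nmin j k Y

/-- `Rminus i k X Y`: determinant of the `k × k` matrix whose first `n - i + 1` rows are
rows `i,…,n` of `X` restricted to columns `1,…,k`, and whose remaining rows are the last
`k - (n - i + 1)` rows of `Y` restricted to columns `1,…,k`. -/
noncomputable def Rminus {R : Type*} [CommRing R] {n : ℕ} (i k : ℕ)
    (X Y : Matrix (Fin n) (Fin n) R) : R :=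
  (Matrix.of fun r c : Fin k =>
    if r.val < n + 1 - i then ent X (i + r.val) (1 + c.val)
    else ent Y (n - k + 1 + r.val) (1 + c.val)).det

/-- `Rplus i k Z X`: determinant of the `(n-i+1) × (n-i+1)` matrix whose first
`(n-i+1) - k` columns are columns `1,…,(n-i+1)-k` of `Z` restricted to rows `i,…,n`,
and whose last `k` columns are columns `1,…,k` of `X` restricted to rows `i,…,n`. -/
noncomputable def Rplus {R : Type*} [CommRing R] {n : ℕ} (i k : ℕ)
    (Z X : Matrix (Fin n) (Fin n) R) : R :=
  (Matrix.of fun r c : Fin (n + 1 - i) =>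
    if c.val < n + 1 - i - k then ent Z (i + r.val) (1 + c.val)
    else ent X (i + r.val) (c.val - (n + 1 - i - k) + 1)).det

/-- Square minor of order `m` with rows `r₀, r₀+1, …` and columns `c₀, c₀+1, …` (1-based). -/
noncomputable def RectMinor {R : Type*} [CommRing R] {n : ℕ} (r₀ c₀ m : ℕ)
    (X : Matrix (Fin n) (Fin n) R) : R :=
  (Matrix.of fun r c : Fin m => ent X (r₀ + r.val) (c₀ + c.val)).det

/-- `u` is upper triangular with ones on the diagonal. -/
def IsUT {R : Type*} [CommRing R] {n : ℕ} (u : Matrix (Fin n) (Fin n) R) : Prop :=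
  (∀ i, u i i = 1) ∧ ∀ i j : Fin n, (j : ℕ) < (i : ℕ) → u i j = 0

/-- Anti-diagonal matrix: entries off the anti-diagonal vanish (0-based: `a + b = n - 1`). -/
def AntiDiag {R : Type*} [Zero R] {n : ℕ} (X : Matrix (Fin n) (Fin n) R) : Prop :=
  ∀ a b : Fin n, (a : ℕ) + (b : ℕ) ≠ n - 1 → X a b = 0

/-- Lower anti-triangular: entries above the anti-diagonal vanish. -/
def LowerAnti {R : Type*} [Zero R] {n : ℕ} (X : Matrix (Fin n) (Fin n) R) : Prop :=
  ∀ a b : Fin n, (a : ℕ) + (b : ℕ) < n - 1 → X a b = 0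

/-- Upper anti-triangular: entries below the anti-diagonal vanish. -/
def UpperAnti {R : Type*} [Zero R] {n : ℕ} (X : Matrix (Fin n) (Fin n) R) : Prop :=
  ∀ a b : Fin n, n - 1 < (a : ℕ) + (b : ℕ) → X a b = 0

set_option maxHeartbeats 1000000

namespace RplusAux

variable {R : Type*} [CommRing R] {n : ℕ}

lemma isUT_blockTriangular {u : Matrix (Fin n) (Fin n) R} (h : IsUT u) :
    u.BlockTriangular id := fun a b hab => h.2 a b hab

lemma isUT_det {u : Matrix (Fin n) (Fin n) R} (h : IsUT u) : u.det = 1 := by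
  rw [Matrix.det_of_upperTriangular (isUT_blockTriangular h)]
  simp [h.1]

lemma isUT_inv {K : Type*} [Field K] {u : Matrix (Fin n) (Fin n) K} (h : IsUT u) :
    IsUT u⁻¹ := by
  have hdet : IsUnit u.det := by rw [isUT_det h]; exact isUnit_one
  have : Invertible u := u.invertibleOfIsUnitDet hdet
  have htri : u⁻¹.BlockTriangular id :=
    Matrix.blockTriangular_inv_of_blockTriangular (isUT_blockTriangular h)
  refine ⟨fun a => ?_, fun a b hab => htri hab⟩
  have h1 : (u * u⁻¹) a a = 1 := by rw [Matrix.mul_nonsing_inv u hdet]; simp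
  rw [Matrix.mul_apply, Finset.sum_eq_single a] at h1
  · rwa [h.1 a, one_mul] at h1
  · intro b _ hba
    rcases lt_or_gt_of_ne (fun hv => hba (Fin.ext hv) : (b : ℕ) ≠ (a : ℕ)) with hlt | hgt
    · rw [h.2 a b hlt, zero_mul]
    · rw [htri hgt, mul_zero]
  · simp

lemma ent_apply (Y : Matrix (Fin n) (Fin n) R) {a b a' b' : ℕ}
    (ha1 : 1 ≤ a) (ha2 : a ≤ n) (hb1 : 1 ≤ b) (hb2 : b ≤ n)
    (ha : a' = a - 1) (hb : b' = b - 1) (ha' : a' < n) (hb' : b' < n) :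
    ent Y a b = Y ⟨a', ha'⟩ ⟨b', hb'⟩ := by
  rw [ent, dif_pos ⟨ha1, ha2, hb1, hb2⟩]
  congr 1 <;> exact Fin.ext (by simp [ha, hb])

lemma sum_fin_split {m k N : ℕ} (h : m + k = N) (F : Fin N → R) :
    ∑ c : Fin N, F c = (∑ j : Fin m, F ⟨j.val, by have := j.isLt; omega⟩)
      + ∑ j : Fin k, F ⟨m + j.val, by have := j.isLt; omega⟩ := by
  subst h
  rw [Fin.sum_univ_add]
  rfl

lemma mul_row_eq {u : Matrix (Fin n) (Fin n) R} (hu : IsUT u) (Y : Matrix (Fin n) (Fin n) R)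
    (s m : ℕ) (hsm : s + m = n) (r : Fin m) (q : Fin n) :
    (u * Y) ⟨s + r.val, by have := r.isLt; omega⟩ q =
      ∑ r' : Fin m, u ⟨s + r.val, by have := r.isLt; omega⟩ ⟨s + r'.val, by have := r'.isLt; omega⟩
        * Y ⟨s + r'.val, by have := r'.isLt; omega⟩ q := by
  rw [Matrix.mul_apply, sum_fin_split (m := s) (k := m) hsm]
  have h0 : ∀ j : Fin s,
      u ⟨s + r.val, by have := r.isLt; omega⟩ ⟨j.val, by have := j.isLt; omega⟩ = 0 := by
    intro j
    exact hu.2 _ _ (by simp; omega)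
  simp only [h0, zero_mul, Finset.sum_const_zero, zero_add]

lemma mul_col_eq {u : Matrix (Fin n) (Fin n) R} (hu : IsUT u) (Y : Matrix (Fin n) (Fin n) R)
    (t : ℕ) (ht : t ≤ n) (a c : Fin n) (hc : c.val < t) :
    (Y * u) a c = ∑ q : Fin t, Y a ⟨q.val, by have := q.isLt; omega⟩
        * u ⟨q.val, by have := q.isLt; omega⟩ c := by
  rw [Matrix.mul_apply, sum_fin_split (m := t) (k := n - t) (by omega)]
  have h0 : ∀ j : Fin (n - t),
      u ⟨t + j.val, by have := j.isLt; omega⟩ c = 0 := by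
    intro j
    exact hu.2 _ _ (by simp; omega)
  simp only [h0, mul_zero, Finset.sum_const_zero, add_zero]

lemma Rplus_mul_left {u : Matrix (Fin n) (Fin n) R} (hu : IsUT u)
    (Z X : Matrix (Fin n) (Fin n) R) (i k : ℕ) (hi1 : 1 ≤ i) (hi2 : i ≤ n) :
    Rplus i k (u * Z) (u * X) = Rplus i k Z X := by
  have hsm : (i - 1) + (n + 1 - i) = n := by omega
  set L : Matrix (Fin (n + 1 - i)) (Fin (n + 1 - i)) R := Matrix.of fun r r' =>
    u ⟨i - 1 + r.val, by have := r.isLt; omega⟩ ⟨i - 1 + r'.val, by have := r'.isLt; omega⟩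
    with hL
  have hLtri : L.BlockTriangular id := by
    intro a b hab
    have hab' : (b : ℕ) < (a : ℕ) := hab
    simp only [hL, Matrix.of_apply]
    exact hu.2 _ _ (by simp; omega)
  have hLdet : L.det = 1 := by
    rw [Matrix.det_of_upperTriangular hLtri]
    apply Finset.prod_eq_one
    intro r _
    simp only [hL, Matrix.of_apply]
    exact hu.1 _
  have key : (Matrix.of fun r c : Fin (n + 1 - i) =>
      if c.val < n + 1 - i - k then ent (u * Z) (i + r.val) (1 + c.val)
      else ent (u * X) (i + r.val) (c.val - (n + 1 - i - k) + 1)) =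
      L * (Matrix.of fun r c : Fin (n + 1 - i) =>
      if c.val < n + 1 - i - k then ent Z (i + r.val) (1 + c.val)
      else ent X (i + r.val) (c.val - (n + 1 - i - k) + 1)) := by
    ext r c
    have hr := r.isLt
    have hcb := c.isLt
    rw [Matrix.mul_apply]
    by_cases hc : c.val < n + 1 - i - k
    · simp only [Matrix.of_apply, if_pos hc, hL]
      rw [ent_apply (u * Z) (a' := i - 1 + r.val) (b' := c.val) (by omega) (by omega)
        (by omega) (by omega) (by omega) (by omega) (by omega) (by omega)]
      rw [mul_row_eq hu Z (i - 1) (n + 1 - i) hsm r]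
      refine Finset.sum_congr rfl fun r' _ => ?_
      have hr' := r'.isLt
      rw [ent_apply Z (a' := i - 1 + r'.val) (b' := c.val) (by omega) (by omega)
        (by omega) (by omega) (by omega) (by omega) (by omega) (by omega)]
    · simp only [Matrix.of_apply, if_neg hc, hL]
      rw [ent_apply (u * X) (a' := i - 1 + r.val) (b' := c.val - (n + 1 - i - k)) (by omega)
        (by omega) (by omega) (by omega) (by omega) (by omega) (by omega) (by omega)]
      rw [mul_row_eq hu X (i - 1) (n + 1 - i) hsm r]
      refine Finset.sum_congr rfl fun r' _ => ?_
      have hr' := r'.isLt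
      rw [ent_apply X (a' := i - 1 + r'.val) (b' := c.val - (n + 1 - i - k)) (by omega)
        (by omega) (by omega) (by omega) (by omega) (by omega) (by omega) (by omega)]
  unfold Rplus
  rw [key, Matrix.det_mul, hLdet, one_mul]

lemma Rplus_mul_right {u v : Matrix (Fin n) (Fin n) R} (hu : IsUT u) (hv : IsUT v)
    (Z X : Matrix (Fin n) (Fin n) R) (i k : ℕ) (hi1 : 1 ≤ i) (hi2 : i ≤ n)
    (hik : k < n + 1 - i) :
    Rplus i k (Z * u) (X * v) = Rplus i k Z X := by
  have hmk : (n + 1 - i - k) + k = n + 1 - i := by omega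
  set D : Matrix (Fin (n + 1 - i)) (Fin (n + 1 - i)) R := Matrix.of fun c' c =>
    if h : c'.val < n + 1 - i - k ∧ c.val < n + 1 - i - k then
      u ⟨c'.val, by omega⟩ ⟨c.val, by omega⟩
    else if h2 : n + 1 - i - k ≤ c'.val ∧ n + 1 - i - k ≤ c.val then
      v ⟨c'.val - (n + 1 - i - k), by have := c'.isLt; omega⟩
        ⟨c.val - (n + 1 - i - k), by have := c.isLt; omega⟩
    else 0 with hD
  have hDtri : D.BlockTriangular id := by
    intro a b hab
    have hab' : (b : ℕ) < (a : ℕ) := hab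
    have ha := a.isLt; have hb := b.isLt
    simp only [hD, Matrix.of_apply]
    split_ifs with h1 h2
    · exact hu.2 _ _ (by simp; omega)
    · exact hv.2 _ _ (by simp; omega)
    · rfl
  have hDdet : D.det = 1 := by
    rw [Matrix.det_of_upperTriangular hDtri]
    apply Finset.prod_eq_one
    intro c _
    have hc := c.isLt
    simp only [hD, Matrix.of_apply]
    split_ifs with h1 h2
    · exact hu.1 _
    · exact hv.1 _
    · omega
  set MZX : Matrix (Fin (n + 1 - i)) (Fin (n + 1 - i)) R := Matrix.of fun r c =>
    if c.val < n + 1 - i - k then ent Z (i + r.val) (1 + c.val)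
    else ent X (i + r.val) (c.val - (n + 1 - i - k) + 1) with hM
  have key : (Matrix.of fun r c : Fin (n + 1 - i) =>
      if c.val < n + 1 - i - k then ent (Z * u) (i + r.val) (1 + c.val)
      else ent (X * v) (i + r.val) (c.val - (n + 1 - i - k) + 1)) = MZX * D := by
    ext r c
    have hr := r.isLt
    have hcb := c.isLt
    rw [Matrix.mul_apply, sum_fin_split (m := n + 1 - i - k) (k := k) hmk
      (fun c' => MZX r c' * D c' c)]
    beta_reduce
    by_cases hc : c.val < n + 1 - i - k
    · have e2 : ∀ j : Fin k,
          MZX r ⟨n + 1 - i - k + j.val, by have := j.isLt; omega⟩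
            * D ⟨n + 1 - i - k + j.val, by have := j.isLt; omega⟩ c = 0 := by
        intro j
        have hj := j.isLt
        simp only [hD, Matrix.of_apply]
        rw [dif_neg (by (try simp only [Fin.val_mk]); omega),
          dif_neg (by (try simp only [Fin.val_mk]); omega), mul_zero]
      have e1 : ∀ j : Fin (n + 1 - i - k),
          MZX r ⟨j.val, by have := j.isLt; omega⟩ * D ⟨j.val, by have := j.isLt; omega⟩ c
            = Z ⟨i - 1 + r.val, by omega⟩ ⟨j.val, by have := j.isLt; omega⟩
              * u ⟨j.val, by have := j.isLt; omega⟩ ⟨c.val, by omega⟩ := by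
        intro j
        have hj := j.isLt
        simp only [hM, hD, Matrix.of_apply]
        rw [if_pos (by (try simp only [Fin.val_mk]); omega),
          dif_pos (show _ ∧ _ from by (try simp only [Fin.val_mk]); omega),
          ent_apply Z (a' := i - 1 + r.val) (b' := j.val) (by omega) (by omega)
            (by (try simp only [Fin.val_mk]); omega) (by (try simp only [Fin.val_mk]); omega)
            (by omega) (by (try simp only [Fin.val_mk]); omega) (by omega) (by omega)]
      rw [Matrix.of_apply, if_pos hc,
        ent_apply (Z * u) (a' := i - 1 + r.val) (b' := c.val) (by omega) (by omega)
          (by omega) (by omega) (by omega) (by omega) (by omega) (by omega),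
        mul_col_eq hu Z (n + 1 - i - k) (by omega) ⟨i - 1 + r.val, by omega⟩
          ⟨c.val, by omega⟩ hc,
        Finset.sum_congr rfl (fun j _ => e1 j),
        Finset.sum_eq_zero (fun j _ => e2 j), add_zero]
    · have e1 : ∀ j : Fin (n + 1 - i - k),
          MZX r ⟨j.val, by have := j.isLt; omega⟩ * D ⟨j.val, by have := j.isLt; omega⟩ c
            = 0 := by
        intro j
        have hj := j.isLt
        simp only [hD, Matrix.of_apply]
        rw [dif_neg (by (try simp only [Fin.val_mk]); omega),
          dif_neg (by (try simp only [Fin.val_mk]); omega), mul_zero]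
      have e2 : ∀ j : Fin k,
          MZX r ⟨n + 1 - i - k + j.val, by have := j.isLt; omega⟩
            * D ⟨n + 1 - i - k + j.val, by have := j.isLt; omega⟩ c
            = X ⟨i - 1 + r.val, by omega⟩ ⟨j.val, by have := j.isLt; omega⟩
              * v ⟨j.val, by have := j.isLt; omega⟩
                ⟨c.val - (n + 1 - i - k), by omega⟩ := by
        intro j
        have hj := j.isLt
        simp only [hM, hD, Matrix.of_apply]
        split_ifs with h1 h2 h3 <;> try omega
        exact congrArg₂ (· * ·)
          (ent_apply X (a' := i - 1 + r.val) (b' := j.val) (by omega) (by omega)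
            (by omega) (by omega) (by omega) (by omega) (by omega) (by omega))
          (congrArg₂ v (Fin.ext (show n + 1 - i - k + ↑j - (n + 1 - i - k) = ↑j by omega)) rfl)
      rw [Matrix.of_apply, if_neg hc,
        ent_apply (X * v) (a' := i - 1 + r.val) (b' := c.val - (n + 1 - i - k)) (by omega)
          (by omega) (by omega) (by omega) (by omega) (by omega) (by omega) (by omega),
        mul_col_eq hv X k (by omega) ⟨i - 1 + r.val, by omega⟩
          ⟨c.val - (n + 1 - i - k), by omega⟩
        (show c.val - (n + 1 - i - k) < k from by omega)]
      have h0 : ∑ j : Fin (n + 1 - i - k), MZX r ⟨↑j, by have := j.isLt; omega⟩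
          * D ⟨↑j, by have := j.isLt; omega⟩ c = 0 := Finset.sum_eq_zero (fun j _ => e1 j)
      have h2 : ∑ j : Fin k, MZX r ⟨n + 1 - i - k + ↑j, by have := j.isLt; omega⟩
            * D ⟨n + 1 - i - k + ↑j, by have := j.isLt; omega⟩ c
          = ∑ j : Fin k, X ⟨i - 1 + ↑r, by omega⟩ ⟨↑j, by have := j.isLt; omega⟩
            * v ⟨↑j, by have := j.isLt; omega⟩ ⟨↑c - (n + 1 - i - k), by omega⟩ :=
        Finset.sum_congr rfl (fun j _ => e2 j)
      exact ((congrArg₂ (· + ·) h0 h2).trans (zero_add _)).symm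
  unfold Rplus
  rw [key, Matrix.det_mul, hDdet, mul_one]

end RplusAux

/-- the polynomials `R⁺_{ik}` are `U`-invariants:
`R⁺_{ik}(g₁ Z g₂⁻¹, g₁ X g₃⁻¹) = R⁺_{ik}(Z, X)` for unitriangular `g₁, g₂, g₃`
and every pair `(i,k)` with `i' = n - i + 1 > k`. -/
theorem Rplus_unitriangular_invariant {K : Type*} [Field K] {n : ℕ} (hn : 1 ≤ n)
    (Z X g₁ g₂ g₃ : Matrix (Fin n) (Fin n) K)
    (h₁ : IsUT g₁) (h₂ : IsUT g₂) (h₃ : IsUT g₃)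
    (i k : ℕ) (hi1 : 1 ≤ i) (hi2 : i ≤ n) (hk1 : 1 ≤ k) (hik : k < n + 1 - i) :
    Rplus i k (g₁ * Z * g₂⁻¹) (g₁ * X * g₃⁻¹) = Rplus i k Z X := by
  rw [mul_assoc g₁ Z g₂⁻¹, mul_assoc g₁ X g₃⁻¹,
    RplusAux.Rplus_mul_left h₁ (Z * g₂⁻¹) (X * g₃⁻¹) i k hi1 hi2,
    RplusAux.Rplus_mul_right (RplusAux.isUT_inv h₂) (RplusAux.isUT_inv h₃) Z X i k hi1 hi2 hik]
end

section
/- Fix (i,k) with i' > k and regard R⁺_{ik}(Z,X) as a polynomial in the 2n² variables z_{ab}, x_{ab}. Then R⁺_{ik}(Z,X) = f₀·x_{ik} + f₁, where f₀ and f₁ are polynomials involving only the variables z_{ab} and the variables x_{ab} with (a,b) ≺ (i,k), and f₀ is a nonzero polynomial. (Order on pairs: (a,b) ≺ (i,k) iff b < k, or b = k and a > i.) -/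
open Matrix

open MvPolynomial in
/-- Variable label of entry `(r,c)` of the matrix defining `Rplus i k Z X`. -/
def rpVar (n i k : ℕ) (hi1 : 1 ≤ i) (hi2 : i ≤ n) (hk1 : 1 ≤ k) (hik : k < n + 1 - i)
    (r c : Fin (n + 1 - i)) : (Fin n × Fin n) ⊕ (Fin n × Fin n) :=
  if c.val < n + 1 - i - k then
    Sum.inl (⟨i - 1 + r.val, by have := r.isLt; omega⟩, ⟨c.val, by omega⟩)
  else
    Sum.inr (⟨i - 1 + r.val, by have := r.isLt; omega⟩,
             ⟨c.val - (n + 1 - i - k), by have := c.isLt; omega⟩)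

lemma rpVar_inj (n i k : ℕ) (hi1 : 1 ≤ i) (hi2 : i ≤ n) (hk1 : 1 ≤ k) (hik : k < n + 1 - i) :
    ∀ r c r' c', rpVar n i k hi1 hi2 hk1 hik r c = rpVar n i k hi1 hi2 hk1 hik r' c' →
      r = r' ∧ c = c' := by
  intro r c r' c' h
  unfold rpVar at h
  split_ifs at h <;>
    simp only [Sum.inl.injEq, Sum.inr.injEq, reduceCtorEq, Prod.mk.injEq, Fin.mk.injEq] at h <;>
    exact ⟨Fin.ext (by omega), Fin.ext (by omega)⟩

set_option maxHeartbeats 1000000 in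
open MvPolynomial in
/-- regarded as a polynomial in the `2n²` variables `z_{ab}, x_{ab}`,
`R⁺_{ik}(Z,X) = f₀ · x_{ik} + f₁` where `f₀ ≠ 0` and `f₀, f₁` involve only the
variables `z_{ab}` and the variables `x_{ab}` with `(a,b) ≺ (i,k)`
(`(a,b) ≺ (i,k)` iff `b < k`, or `b = k` and `a > i`).
Here `z`-variables are `Sum.inl` and `x`-variables are `Sum.inr`. -/
theorem Rplus_triangular {K : Type*} [Field K] {n : ℕ}
    (i k : ℕ) (hi1 : 1 ≤ i) (hi2 : i ≤ n) (hk1 : 1 ≤ k) (hik : k < n + 1 - i) :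
    ∃ f₀ f₁ : MvPolynomial ((Fin n × Fin n) ⊕ (Fin n × Fin n)) K,
      f₀ ≠ 0 ∧
      Rplus i k
          (Matrix.of fun a b : Fin n => (X (Sum.inl (a, b)) : MvPolynomial _ K))
          (Matrix.of fun a b : Fin n => (X (Sum.inr (a, b)) : MvPolynomial _ K))
        = f₀ * X (Sum.inr (⟨i - 1, by omega⟩, ⟨k - 1, by omega⟩)) + f₁ ∧
      (∀ v ∈ f₀.vars,
        Sum.elim (fun _ : Fin n × Fin n => True) (fun p : Fin n × Fin n =>
          (p.2 : ℕ) + 1 < k ∨ ((p.2 : ℕ) + 1 = k ∧ i < (p.1 : ℕ) + 1)) v) ∧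
      (∀ v ∈ f₁.vars,
        Sum.elim (fun _ : Fin n × Fin n => True) (fun p : Fin n × Fin n =>
          (p.2 : ℕ) + 1 < k ∨ ((p.2 : ℕ) + 1 = k ∧ i < (p.1 : ℕ) + 1)) v) := by
  classical
  set v := rpVar n i k hi1 hi2 hk1 hik with hv
  have hvinj := rpVar_inj n i k hi1 hi2 hk1 hik
  set t : Fin (n + 1 - i) := ⟨n - i, by omega⟩ with ht
  set z0 : Fin (n + 1 - i) := ⟨0, by omega⟩ with hz0
  set M : Matrix (Fin (n + 1 - i)) (Fin (n + 1 - i))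
      (MvPolynomial ((Fin n × Fin n) ⊕ (Fin n × Fin n)) K) :=
    Matrix.of fun r c => X (v r c) with hM
  have hvt : v z0 t = Sum.inr (⟨i - 1, by omega⟩, ⟨k - 1, by omega⟩) := by
    rw [hv]; unfold rpVar
    split
    · next h => exfalso; simp only [ht] at h; omega
    · simp only [Sum.inr.injEq, Prod.mk.injEq, Fin.mk.injEq, Fin.val_mk]
      simp only [ht, hz0]
      omega
  have hdet : Rplus i k
      (Matrix.of fun a b : Fin n => (X (Sum.inl (a, b)) : MvPolynomial _ K))
      (Matrix.of fun a b : Fin n => (X (Sum.inr (a, b)) : MvPolynomial _ K)) = M.det := by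
    unfold Rplus
    rw [hM]
    congr 1
    refine Matrix.ext fun r c => ?_
    have hr := r.isLt
    have hc' := c.isLt
    simp only [Matrix.of_apply, hv]
    unfold rpVar ent
    split
    · next hcc =>
      split
      · next hin =>
        simp only [Matrix.of_apply]
        exact congrArg _ (by simp only [Sum.inl.injEq, Prod.mk.injEq, Fin.mk.injEq]; omega)
      · next hin => exact absurd (by omega) hin
    · next hcc =>
      split
      · next hin =>
        simp only [Matrix.of_apply]
        exact congrArg _ (by simp only [Sum.inr.injEq, Prod.mk.injEq, Fin.mk.injEq]; omega)
      · next hin => exact absurd (by omega) hin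
  have hvars : ∀ (s : Finset (Equiv.Perm (Fin (n + 1 - i)))) (e : Finset (Fin (n + 1 - i)))
      (w : (Fin n × Fin n) ⊕ (Fin n × Fin n)),
      w ∈ (∑ σ ∈ s, ((Equiv.Perm.sign σ : ℤ) : MvPolynomial ((Fin n × Fin n) ⊕ (Fin n × Fin n)) K) *
        ∏ j ∈ e, X (v (σ j) j)).vars →
      ∃ σ ∈ s, ∃ j ∈ e, w = v (σ j) j := by
    intro s e w hw
    obtain ⟨σ, hσ, hw⟩ := Finset.mem_biUnion.mp (MvPolynomial.vars_sum_subset _ _ hw)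
    rcases Finset.mem_union.mp (MvPolynomial.vars_mul _ _ hw) with h | h
    · exfalso
      rw [← map_intCast (C : K →+* MvPolynomial ((Fin n × Fin n) ⊕ (Fin n × Fin n)) K),
        MvPolynomial.vars_C] at h
      exact absurd h (Finset.notMem_empty w)
    · obtain ⟨j, hj, hw⟩ := Finset.mem_biUnion.mp (MvPolynomial.vars_prod _ h)
      rw [MvPolynomial.vars_X, Finset.mem_singleton] at hw
      exact ⟨σ, hσ, j, hj, hw⟩
  have hP : ∀ r c : Fin (n + 1 - i), (r ≠ z0 ∨ c ≠ t) →
      Sum.elim (fun _ : Fin n × Fin n => True) (fun p : Fin n × Fin n =>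
        (p.2 : ℕ) + 1 < k ∨ ((p.2 : ℕ) + 1 = k ∧ i < (p.1 : ℕ) + 1)) (v r c) := by
    intro r c hrc
    rw [hv]; unfold rpVar
    split_ifs with hcc
    · trivial
    · simp only [Sum.elim_inr]
      have hcv := c.isLt
      rcases hrc with hr | hcne
      · by_cases hct : (c : ℕ) = n - i
        · have hrv : (r : ℕ) ≠ 0 := fun h => hr (Fin.ext (by simp [hz0, h]))
          right; omega
        · left; omega
      · have hct : (c : ℕ) ≠ n - i := fun h => hcne (Fin.ext (by simp [ht, h]))
        left; omega
  refine ⟨(∑ σ ∈ Finset.univ.filter fun σ : Equiv.Perm (Fin (n + 1 - i)) => σ t = z0,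
      ((Equiv.Perm.sign σ : ℤ) : MvPolynomial ((Fin n × Fin n) ⊕ (Fin n × Fin n)) K) *
        ∏ j ∈ Finset.univ.erase t, X (v (σ j) j)), (∑ σ ∈ Finset.univ.filter fun σ : Equiv.Perm (Fin (n + 1 - i)) => ¬ σ t = z0,
      ((Equiv.Perm.sign σ : ℤ) : MvPolynomial ((Fin n × Fin n) ⊕ (Fin n × Fin n)) K) *
        ∏ j, X (v (σ j) j)), ?_, ?_, ?_, ?_⟩
  · -- f₀ ≠ 0
    have hs0t : Equiv.swap z0 t t = z0 := Equiv.swap_apply_right _ _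
    let φ : ((Fin n × Fin n) ⊕ (Fin n × Fin n)) → K := fun w =>
      if ∃ j : Fin (n + 1 - i), j ≠ t ∧ w = v ((Equiv.swap z0 t) j) j then 1 else 0
    have hφ : ∀ w, φ w = if ∃ j : Fin (n + 1 - i), j ≠ t ∧ w = v ((Equiv.swap z0 t) j) j then 1 else 0 :=
      fun w => rfl
    intro h0
    have heval : MvPolynomial.eval φ (∑ σ ∈ Finset.univ.filter fun σ : Equiv.Perm (Fin (n + 1 - i)) => σ t = z0,
      ((Equiv.Perm.sign σ : ℤ) : MvPolynomial ((Fin n × Fin n) ⊕ (Fin n × Fin n)) K) *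
        ∏ j ∈ Finset.univ.erase t, X (v (σ j) j)) = ((Equiv.Perm.sign (Equiv.swap z0 t) : ℤ) : K) := by
      rw [_root_.map_sum,
        Finset.sum_eq_single_of_mem (Equiv.swap z0 t)
          (Finset.mem_filter.mpr ⟨Finset.mem_univ _, hs0t⟩) ?_]
      · rw [_root_.map_mul, _root_.map_intCast, _root_.map_prod]
        rw [Finset.prod_congr rfl (fun j hj => ?_), Finset.prod_const_one, mul_one]
        rw [MvPolynomial.eval_X, hφ]
        exact if_pos ⟨j, (Finset.mem_erase.mp hj).1, rfl⟩
      · intro σ hσ hne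
        have hσt := (Finset.mem_filter.mp hσ).2
        obtain ⟨j, hj⟩ : ∃ j, σ j ≠ (Equiv.swap z0 t) j := by
          by_contra hall
          push_neg at hall
          exact hne (Equiv.ext hall)
        have hjt : j ≠ t := by rintro rfl; exact hj (hσt.trans hs0t.symm)
        rw [_root_.map_mul, _root_.map_prod,
          Finset.prod_eq_zero (Finset.mem_erase.mpr ⟨hjt, Finset.mem_univ j⟩), mul_zero]
        rw [MvPolynomial.eval_X, hφ, if_neg]
        rintro ⟨j', hj't, hj'eq⟩
        obtain ⟨hr, hcc⟩ := hvinj _ _ _ _ hj'eq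
        subst hcc
        exact hj hr
    rw [h0, _root_.map_zero] at heval
    rcases Int.units_eq_one_or (Equiv.Perm.sign (Equiv.swap z0 t)) with h | h <;> rw [h] at heval <;>
      simp at heval
  · -- the equality
    rw [hdet, Matrix.det_apply',
      ← Finset.sum_filter_add_sum_filter_not Finset.univ (fun σ => σ t = z0)]
    refine congrArg₂ (· + ·) ?_ ?_
    · rw [Finset.sum_mul]
      refine Finset.sum_congr rfl fun σ hσ => ?_
      have hσt : σ t = z0 := (Finset.mem_filter.mp hσ).2
      have hsplit : ∏ j, M (σ j) j
          = X (v z0 t) * ∏ j ∈ Finset.univ.erase t, X (v (σ j) j) := by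
        rw [← Finset.mul_prod_erase Finset.univ _ (Finset.mem_univ t)]
        simp only [hM, Matrix.of_apply, hσt]
      rw [hsplit, hvt]
      ring
    · refine Finset.sum_congr rfl fun σ hσ => ?_
      simp only [hM, Matrix.of_apply]
  · intro w hw
    obtain ⟨σ, hσ, j, hj, rfl⟩ := hvars _ _ _ hw
    exact hP _ _ (Or.inr (Finset.mem_erase.mp hj).1)
  · intro w hw
    obtain ⟨σ, hσ, j, hj, rfl⟩ := hvars _ _ _ hw
    by_cases hjt : j = t
    · subst hjt
      exact hP _ _ (Or.inl (Finset.mem_filter.mp hσ).2)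
    · exact hP _ _ (Or.inr hjt)
end

section
/- Fix (i,k) with i' > k. There is a sign ε ∈ {+1,−1}, depending only on n, i, k, such that for every X ∈ Mat(n,K) and every lower anti-triangular matrix S⁻ (entries at positions (a,b) with a+b < n+1 are zero), R⁺_{ik}(S⁻, X) = ε · D_{i+k}(S⁻) · N_I^J(X), where N_I^J(X) is the minor of X with rows I = {i,…,i+k−1} and columns J = {1,…,k}. -/
open Matrix

/-- for a lower anti-triangular matrix `S⁻`, `R⁺_{ik}(S⁻, X)` factors as
`± D_{i+k}(S⁻) · N_I^J(X)`, where `I = {i,…,i+k-1}`, `J = {1,…,k}`, `i' = n - i + 1 > k`,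
and the sign depends only on `n, i, k`. -/
theorem Rplus_lowerAnti {K : Type*} [Field K] {n : ℕ} (hn : 1 ≤ n)
    (i k : ℕ) (hi1 : 1 ≤ i) (hi2 : i ≤ n) (hk1 : 1 ≤ k) (hik : k < n + 1 - i) :
    ∃ ε : K, (ε = 1 ∨ ε = -1) ∧
      ∀ X S : Matrix (Fin n) (Fin n) K, LowerAnti S →
        Rplus i k S X = ε * Dmin (i + k) S * RectMinor i 1 k X := by
  set q := n + 1 - (i + k) with hqdef
  have hq : k + q = n + 1 - i := by omega
  have hq' : q + k = n + 1 - i := by omega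
  let e : Fin k ⊕ Fin q ≃ Fin (n + 1 - i) := finSumFinEquiv.trans (finCongr hq)
  let f : Fin q ⊕ Fin k ≃ Fin (n + 1 - i) := finSumFinEquiv.trans (finCongr hq')
  let g : Fin k ⊕ Fin q ≃ Fin (n + 1 - i) := (Equiv.sumComm _ _).trans f
  let σ : Equiv.Perm (Fin k ⊕ Fin q) := g.trans e.symm
  refine ⟨((Equiv.Perm.sign σ : ℤ) : K), ?_, ?_⟩
  · rcases Int.units_eq_one_or (Equiv.Perm.sign σ) with h | h <;> simp [h]
  intro X S hS
  set M : Matrix (Fin (n + 1 - i)) (Fin (n + 1 - i)) K :=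
    Matrix.of fun r c : Fin (n + 1 - i) =>
      if c.val < n + 1 - i - k then ent S (i + r.val) (1 + c.val)
      else ent X (i + r.val) (c.val - (n + 1 - i - k) + 1) with hMdef
  have hval_e_l : ∀ r : Fin k, ((e (Sum.inl r) : Fin (n + 1 - i)) : ℕ) = r.val := by
    intro r; simp [e]
  have hval_e_r : ∀ r : Fin q, ((e (Sum.inr r) : Fin (n + 1 - i)) : ℕ) = k + r.val := by
    intro r; simp [e]
  have hval_g_l : ∀ c : Fin k, ((g (Sum.inl c) : Fin (n + 1 - i)) : ℕ) = q + c.val := by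
    intro c; simp [g, f]
  have hval_g_r : ∀ c : Fin q, ((g (Sum.inr c) : Fin (n + 1 - i)) : ℕ) = c.val := by
    intro c; simp [g, f]
  -- The reindexed matrix is a block matrix with zero top-right block
  have hblock : M.submatrix e g =
      Matrix.fromBlocks
        (Matrix.of fun r c : Fin k => ent X (i + r.val) (1 + c.val))
        0
        (Matrix.of fun (r : Fin q) (c : Fin k) => ent X (i + (k + r.val)) (1 + c.val))
        (Matrix.of fun r c : Fin q => ent S (i + k + r.val) (1 + c.val)) := by
    ext r c
    rcases r with r | r <;> rcases c with c | c <;>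
      simp only [Matrix.submatrix_apply, hMdef, Matrix.of_apply, Matrix.fromBlocks_apply₁₁,
        Matrix.fromBlocks_apply₁₂, Matrix.fromBlocks_apply₂₁, Matrix.fromBlocks_apply₂₂,
        Matrix.zero_apply, hval_e_l, hval_e_r, hval_g_l, hval_g_r]
    · rw [if_neg (by omega)]
      congr 1
      omega
    · rw [if_pos (by omega)]
      -- this entry of S vanishes by lower anti-triangularity
      rw [ent]
      split
      · next h =>
        apply hS
        simp only []
        omega
      · rfl
    · rw [if_neg (by omega)]
      congr 1
      omega
    · rw [if_pos (by omega)]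
      congr 1
      omega
  -- relate det M to det of the reindexed matrix
  have hsub : M.submatrix e g = (M.submatrix e e).submatrix id σ := by
    ext r c
    simp [σ, Matrix.submatrix_apply]
  have hdet1 : (M.submatrix e g).det = (Equiv.Perm.sign σ : ℤ) * M.det := by
    rw [hsub, Matrix.det_permute', Matrix.det_submatrix_equiv_self]
  have hdet2 : (M.submatrix e g).det =
      (Matrix.of fun r c : Fin k => ent X (i + r.val) (1 + c.val)).det *
      (Matrix.of fun r c : Fin q => ent S (i + k + r.val) (1 + c.val)).det := by
    rw [hblock, Matrix.det_fromBlocks_zero₁₂]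
  have hsign : ((Equiv.Perm.sign σ : ℤ) : K) * ((Equiv.Perm.sign σ : ℤ) : K) = 1 := by
    rcases Int.units_eq_one_or (Equiv.Perm.sign σ) with h | h <;> simp [h]
  have hM : Rplus i k S X = M.det := rfl
  have hD : Dmin (i + k) S = (Matrix.of fun r c : Fin q => ent S (i + k + r.val) (1 + c.val)).det := by
    rfl
  have hR : RectMinor i 1 k X = (Matrix.of fun r c : Fin k => ent X (i + r.val) (1 + c.val)).det := by
    rfl
  rw [hM, hD, hR]
  have : M.det = ((Equiv.Perm.sign σ : ℤ) : K) * ((M.submatrix e g).det) := by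
    rw [hdet1]
    push_cast
    rw [← mul_assoc]
    rw [hsign, one_mul]
  rw [this, hdet2]
  ring
end
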